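/- Let H be positive definite d×d with orthonormal eigenbasis v_1,...,v_d, let w, ℓ ∈ ℝ^d, and let s be uniform on {±v_i : i ∈ [d]}. Define w̃ = w + H^{-1/2} s and ℓ̃ = d · H^{1/2} s · ⟨w̃, ℓ⟩. Then E[‖ℓ̃‖²] = d‖ℓ‖² + d⟨ℓ, w⟩² · Tr(H). -/

import Mathlib

open Matrix Finset

/-- Second moment of the perturbation-based loss estimator:
`E[‖ℓ̃‖²] = d‖ℓ‖² + d⟨ℓ,w⟩² Tr(H)`, where the expectation is over the uniform
choice of `s` among the `2d` signed eigenvectors of `H`. -/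
theorem stmt1 {d : ℕ} (hd : 0 < d)
    (H Hsqrt Hinvsqrt : Matrix (Fin d) (Fin d) ℝ)
    (v : Fin d → (Fin d → ℝ)) (lam : Fin d → ℝ)
    (hlam : ∀ i, 0 < lam i)
    (horth : ∀ i j, v i ⬝ᵥ v j = if i = j then (1 : ℝ) else 0)
    (hH : ∀ i, H.mulVec (v i) = lam i • v i)
    (hHsqrt : ∀ i, Hsqrt.mulVec (v i) = Real.sqrt (lam i) • v i)
    (hHinvsqrt : ∀ i, Hinvsqrt.mulVec (v i) = (Real.sqrt (lam i))⁻¹ • v i)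
    (w ℓ : Fin d → ℝ)
    (est : (Fin d → ℝ) → (Fin d → ℝ))
    (hest : ∀ s, est s = (((d : ℝ) * ((w + Hinvsqrt.mulVec s) ⬝ᵥ ℓ)) • Hsqrt.mulVec s)) :
    (1 / (2 * (d : ℝ))) *
      (∑ i : Fin d, (est (v i) ⬝ᵥ est (v i) + est (-(v i)) ⬝ᵥ est (-(v i))))
      = (d : ℝ) * (ℓ ⬝ᵥ ℓ) + (d : ℝ) * (ℓ ⬝ᵥ w) ^ 2 * H.trace := by
  classical
  set V : Matrix (Fin d) (Fin d) ℝ := Matrix.of (fun i j => v i j) with hVdef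
  have hVVt : V * Vᵀ = 1 := by
    ext i j
    simpa [Matrix.mul_apply, Matrix.one_apply, dotProduct, V] using horth i j
  have hVtV : Vᵀ * V = 1 := mul_eq_one_comm.mp hVVt
  have h1 : H * Vᵀ = Vᵀ * Matrix.diagonal lam := by
    ext j i
    have := congrFun (hH i) j
    simp only [Matrix.mulVec, dotProduct, Pi.smul_apply, smul_eq_mul] at this
    simp [Matrix.mul_apply, Matrix.diagonal, V, this, mul_comm]
  have hHdec : H = Vᵀ * (Matrix.diagonal lam * V) := by
    calc H = H * (Vᵀ * V) := by rw [hVtV, Matrix.mul_one]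
    _ = (H * Vᵀ) * V := by rw [Matrix.mul_assoc]
    _ = (Vᵀ * Matrix.diagonal lam) * V := by rw [h1]
    _ = Vᵀ * (Matrix.diagonal lam * V) := by rw [Matrix.mul_assoc]
  have htr : H.trace = ∑ i, lam i := by
    rw [hHdec, Matrix.trace_mul_comm, Matrix.mul_assoc, hVVt, Matrix.mul_one,
      Matrix.trace_diagonal]
  have key : ∀ j k, ∑ i, v i j * v i k = if j = k then (1:ℝ) else 0 := by
    intro j k
    have := congrFun (congrFun hVtV j) k
    simpa [Matrix.mul_apply, Matrix.one_apply, V] using this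
  have hsum : ∑ i, (v i ⬝ᵥ ℓ)^2 = ℓ ⬝ᵥ ℓ := by
    have expand : ∀ i, (v i ⬝ᵥ ℓ)^2 = ∑ j, ∑ k, (ℓ j * ℓ k) * (v i j * v i k) := by
      intro i
      rw [sq, dotProduct, Finset.sum_mul_sum]
      exact Finset.sum_congr rfl fun j _ => Finset.sum_congr rfl fun k _ => by ring
    rw [Finset.sum_congr rfl fun i _ => expand i, Finset.sum_comm]
    rw [Finset.sum_congr rfl fun j _ => Finset.sum_comm]
    have inner : ∀ j k, ∑ i, (ℓ j * ℓ k) * (v i j * v i k)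
        = if j = k then ℓ j * ℓ k else 0 := by
      intro j k
      rw [← Finset.mul_sum, key j k]
      split <;> simp
    rw [Finset.sum_congr rfl fun j _ => Finset.sum_congr rfl fun k _ => inner j k]
    simp [dotProduct]
  have hterm : ∀ i, est (v i) ⬝ᵥ est (v i) + est (-(v i)) ⬝ᵥ est (-(v i))
      = 2 * (d:ℝ)^2 * ((w ⬝ᵥ ℓ)^2 * lam i + (v i ⬝ᵥ ℓ)^2) := by
    intro i
    have hvv : v i ⬝ᵥ v i = 1 := by simpa using horth i i
    have hl := hlam i
    have hs : Real.sqrt (lam i) * Real.sqrt (lam i) = lam i := Real.mul_self_sqrt hl.le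
    have hspos : (0:ℝ) < Real.sqrt (lam i) := Real.sqrt_pos.mpr hl
    simp only [hest, Matrix.mulVec_neg, hHsqrt, hHinvsqrt, smul_neg, add_dotProduct,
      neg_dotProduct, smul_dotProduct, dotProduct_smul, dotProduct_neg, smul_eq_mul, hvv]
    field_simp
    ring_nf
    rw [show Real.sqrt (lam i) ^ 2 = lam i from Real.sq_sqrt hl.le]
  rw [Finset.sum_congr rfl fun i _ => hterm i]
  have hexp : ∑ i, 2 * (d:ℝ)^2 * ((w ⬝ᵥ ℓ)^2 * lam i + (v i ⬝ᵥ ℓ)^2)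
      = 2 * (d:ℝ)^2 * ((w ⬝ᵥ ℓ)^2 * (∑ i, lam i) + ℓ ⬝ᵥ ℓ) := by
    rw [← Finset.mul_sum, Finset.sum_add_distrib, ← Finset.mul_sum, hsum]
  rw [hexp, htr, dotProduct_comm ℓ w]
  have hdne : (d:ℝ) ≠ 0 := Nat.cast_ne_zero.mpr hd.ne'
  field_simp
  ring
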